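/- Let M be a model category with pushouts, and let ℕ denote the poset of natural numbers with its usual order, viewed as a category. Then the functor category Fun(ℕ, M) admits a model category structure in which a map f : X ⟶ Y is: a weak equivalence (resp. fibration) iff each component f_n : X_n → Y_n is a weak equivalence (resp. fibration) in M; and a cofibration iff f_0 : X_0 → Y_0 is a cofibration and for every n the corner map X_{n+1} ⊔_{X_n} Y_n → Y_{n+1} is a cofibration. Moreover, in this model structure an object X is cofibrant if and only if X_0 is cofibrant and every structure map X_n → X_{n+1} is a cofibration; and the constant-diagram functor const : M ⥤ Fun(ℕ, M) preserves fibrations and trivial fibrations, so that if M has sequential colimits then the adjunction colim : Fun(ℕ, M) ⇄ M : const is a Quillen adjunction. -/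

import Mathlib

open CategoryTheory Limits

universe w v u

namespace Paper

/-- `f` is a retract of `g` in the arrow category. -/
def IsRetract {M : Type u} [Category.{v} M] {a b x y : M} (f : a ⟶ b) (g : x ⟶ y) : Prop :=
  ∃ (i : a ⟶ x) (r : x ⟶ a) (i' : b ⟶ y) (r' : y ⟶ b),
    i ≫ r = 𝟙 a ∧ i' ≫ r' = 𝟙 b ∧ i ≫ g = f ≫ i' ∧ g ≫ r' = r ≫ f

/-- A (Quillen) model structure on a category `M`: classes of weak equivalences,
cofibrations and fibrations, containing all isomorphisms, with the two-out-of-three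
property for weak equivalences, all three classes closed under retracts, the lifting
axioms, and the two factorization axioms. -/
structure ModelStructure (M : Type u) [Category.{v} M] where
  W : MorphismProperty M
  Cof : MorphismProperty M
  Fib : MorphismProperty M
  iso_W : MorphismProperty.isomorphisms M ≤ W
  iso_Cof : MorphismProperty.isomorphisms M ≤ Cof
  iso_Fib : MorphismProperty.isomorphisms M ≤ Fib
  two_of_three : W.HasTwoOutOfThreeProperty
  retract_W : ∀ {a b x y : M} (f : a ⟶ b) (g : x ⟶ y), IsRetract f g → W g → W f
  retract_Cof : ∀ {a b x y : M} (f : a ⟶ b) (g : x ⟶ y), IsRetract f g → Cof g → Cof f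
  retract_Fib : ∀ {a b x y : M} (f : a ⟶ b) (g : x ⟶ y), IsRetract f g → Fib g → Fib f
  lift_Cof_trivFib : ∀ {a b x y : M} (i : a ⟶ b) (p : x ⟶ y),
    Cof i → W p → Fib p → HasLiftingProperty i p
  lift_trivCof_Fib : ∀ {a b x y : M} (i : a ⟶ b) (p : x ⟶ y),
    Cof i → W i → Fib p → HasLiftingProperty i p
  fact_Cof_trivFib : ∀ {x y : M} (f : x ⟶ y),
    ∃ (z : M) (i : x ⟶ z) (p : z ⟶ y), Cof i ∧ W p ∧ Fib p ∧ i ≫ p = f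
  fact_trivCof_Fib : ∀ {x y : M} (f : x ⟶ y),
    ∃ (z : M) (i : x ⟶ z) (p : z ⟶ y), Cof i ∧ W i ∧ Fib p ∧ i ≫ p = f

variable {M : Type u} [Category.{v} M]

/-- An object is cofibrant if the map from the initial object to it is a cofibration. -/
def ModelStructure.Cofibrant [HasInitial M] (S : ModelStructure M) (x : M) : Prop :=
  S.Cof (initial.to x)

/-- An object is fibrant if the map from it to the terminal object is a fibration. -/
def ModelStructure.Fibrant [HasTerminal M] (S : ModelStructure M) (x : M) : Prop :=
  S.Fib (terminal.from x)

end Paper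

namespace Paper

variable {M : Type u} [Category.{v} M]

/-- For a map `f : X ⟶ Y` of `ℕ`-indexed diagrams in `M` and `n : ℕ`, the corner map
`X_{n+1} ⊔_{X_n} Y_n ⟶ Y_{n+1}` induced by the naturality square of `f` at `n → n+1`. -/
noncomputable def seqCorner [HasPushouts M] {X Y : ℕ ⥤ M} (f : X ⟶ Y) (n : ℕ) :
    pushout (X.map (homOfLE (Nat.le_succ n))) (f.app n) ⟶ Y.obj (n + 1) :=
  pushout.desc (f.app (n + 1)) (Y.map (homOfLE (Nat.le_succ n)))
    (f.naturality (homOfLE (Nat.le_succ n)))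

end Paper

namespace Paper

variable {M : Type u} [Category.{v} M]

variable (S : ModelStructure M)

/-! ### Auxiliary lemmas -/

lemma isRetract_of_isos {a b x y : M} (f : a ⟶ b) (g : x ⟶ y)
    (e : a ≅ x) (e' : b ≅ y) (h : e.hom ≫ g = f ≫ e'.hom) : IsRetract f g :=
  ⟨e.hom, e.inv, e'.hom, e'.inv, by simp, by simp, h, by
    rw [Iso.comp_inv_eq, Category.assoc, ← h, Iso.inv_hom_id_assoc]⟩

lemma exists_seq {α : ℕ → Sort w} (P : ∀ n, α n → Prop) (R : ∀ n, α n → α (n + 1) → Prop)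
    (h0 : ∃ a, P 0 a) (hs : ∀ n a, P n a → ∃ b, P (n + 1) b ∧ R n a b) :
    ∃ f : ∀ n, α n, (∀ n, P n (f n)) ∧ (∀ n, R n (f n) (f (n + 1))) := by
  let g : ∀ n, {a : α n // P n a} := fun n => Nat.rec ⟨h0.choose, h0.choose_spec⟩
      (fun n prev => ⟨(hs n prev.1 prev.2).choose, (hs n prev.1 prev.2).choose_spec.1⟩) n
  refine ⟨fun n => (g n).1, fun n => (g n).2, fun n => ?_⟩
  exact (hs n (g n).1 (g n).2).choose_spec.2

variable (S : ModelStructure M)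

lemma ModelStructure.cof_of_llp {a b : M} (f : a ⟶ b)
    (h : ∀ {x y : M} (p : x ⟶ y), S.W p → S.Fib p → HasLiftingProperty f p) : S.Cof f := by
  obtain ⟨z, i, p, hi, hw, hp, fac⟩ := S.fact_Cof_trivFib f
  haveI := h p hw hp
  have sq : CommSq i f p (𝟙 b) := ⟨by simp [fac]⟩
  exact S.retract_Cof f i
    ⟨𝟙 a, 𝟙 a, sq.lift, p, by simp, sq.fac_right, by simpa using sq.fac_left.symm,
      by simpa using fac⟩ hi

lemma ModelStructure.trivCof_of_llp {a b : M} (f : a ⟶ b)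
    (h : ∀ {x y : M} (p : x ⟶ y), S.Fib p → HasLiftingProperty f p) : S.Cof f ∧ S.W f := by
  obtain ⟨z, i, p, hi, hw, hp, fac⟩ := S.fact_trivCof_Fib f
  haveI := h p hp
  have sq : CommSq i f p (𝟙 b) := ⟨by simp [fac]⟩
  have hr : IsRetract f i :=
    ⟨𝟙 a, 𝟙 a, sq.lift, p, by simp, sq.fac_right, by simpa using sq.fac_left.symm,
      by simpa using fac⟩
  exact ⟨S.retract_Cof f i hr hi, S.retract_W f i hr hw⟩

lemma hasLiftingProperty_pushout_inl [HasPushouts M] {a b c x y : M} (f : a ⟶ b) (g : a ⟶ c)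
    (p : x ⟶ y) [HasLiftingProperty g p] :
    HasLiftingProperty (pushout.inl f g) p := by
  constructor
  intro u v sq
  have sq' : CommSq (f ≫ u) g p (pushout.inr f g ≫ v) :=
    ⟨by rw [Category.assoc, sq.w, ← Category.assoc, pushout.condition, Category.assoc]⟩
  exact CommSq.HasLift.mk'
    { l := pushout.desc u sq'.lift (by rw [sq'.fac_left])
      fac_left := by simp [pushout.inl_desc]
      fac_right := by
        apply pushout.hom_ext
        · simpa [pushout.inl_desc_assoc] using sq.w
        · simpa [pushout.inr_desc_assoc] using sq'.fac_right }

end Paper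

namespace Paper

variable {M : Type u} [Category.{v} M] (S : ModelStructure M)

lemma ModelStructure.cof_iff_of_isos {a b x y : M} (f : a ⟶ b) (g : x ⟶ y)
    (e : a ≅ x) (e' : b ≅ y) (h : e.hom ≫ g = f ≫ e'.hom) : S.Cof f ↔ S.Cof g := by
  constructor
  · intro hf
    refine S.retract_Cof g f (isRetract_of_isos g f e.symm e'.symm ?_) hf
    dsimp
    rw [Iso.inv_comp_eq, ← Category.assoc, h, Category.assoc, Iso.hom_inv_id, Category.comp_id]
  · exact fun hg => S.retract_Cof f g (isRetract_of_isos f g e e' h) hg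

lemma ModelStructure.cof_comp {a b c : M} (f : a ⟶ b) (g : b ⟶ c)
    (hf : S.Cof f) (hg : S.Cof g) : S.Cof (f ≫ g) :=
  S.cof_of_llp _ fun p hw hp => by
    haveI := S.lift_Cof_trivFib f p hf hw hp
    haveI := S.lift_Cof_trivFib g p hg hw hp
    infer_instance

lemma ModelStructure.trivCof_comp {a b c : M} (f : a ⟶ b) (g : b ⟶ c)
    (hf : S.Cof f) (hf' : S.W f) (hg : S.Cof g) (hg' : S.W g) :
    S.Cof (f ≫ g) ∧ S.W (f ≫ g) :=
  S.trivCof_of_llp _ fun p hp => by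
    haveI := S.lift_trivCof_Fib f p hf hf' hp
    haveI := S.lift_trivCof_Fib g p hg hg' hp
    infer_instance

variable [HasPushouts M]

lemma ModelStructure.cof_pushout_inl {a b c : M} (f : a ⟶ b) (g : a ⟶ c) (hg : S.Cof g) :
    S.Cof (pushout.inl f g) :=
  S.cof_of_llp _ fun p hw hp => by
    haveI := S.lift_Cof_trivFib g p hg hw hp
    exact hasLiftingProperty_pushout_inl f g p

lemma ModelStructure.trivCof_pushout_inl {a b c : M} (f : a ⟶ b) (g : a ⟶ c)
    (hg : S.Cof g) (hg' : S.W g) : S.Cof (pushout.inl f g) ∧ S.W (pushout.inl f g) :=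
  S.trivCof_of_llp _ fun p hp => by
    haveI := S.lift_trivCof_Fib g p hg hg' hp
    exact hasLiftingProperty_pushout_inl f g p

section Seq

variable {X Y : ℕ ⥤ M}

lemma inl_seqCorner (f : X ⟶ Y) (n : ℕ) :
    pushout.inl _ _ ≫ seqCorner f n = f.app (n + 1) :=
  pushout.inl_desc _ _ _

lemma inr_seqCorner (f : X ⟶ Y) (n : ℕ) :
    pushout.inr _ _ ≫ seqCorner f n = Y.map (homOfLE (Nat.le_succ n)) :=
  pushout.inr_desc _ _ _

lemma ModelStructure.level_cof (f : X ⟶ Y) (h0 : S.Cof (f.app 0))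
    (hc : ∀ n, S.Cof (seqCorner f n)) : ∀ n, S.Cof (f.app n) := by
  intro n
  induction n with
  | zero => exact h0
  | succ n ih =>
    rw [← inl_seqCorner]
    exact S.cof_comp _ _ (S.cof_pushout_inl _ _ ih) (hc n)

lemma ModelStructure.corner_W (f : X ⟶ Y) (h0 : S.Cof (f.app 0))
    (hc : ∀ n, S.Cof (seqCorner f n)) (hw : ∀ n, S.W (f.app n)) :
    ∀ n, S.W (seqCorner f n) := by
  haveI := S.two_of_three
  intro n
  have hinl := S.trivCof_pushout_inl (X.map (homOfLE (Nat.le_succ n))) (f.app n)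
    (S.level_cof f h0 hc n) (hw n)
  refine S.W.of_precomp (pushout.inl _ _) (seqCorner f n) hinl.2 ?_
  rw [inl_seqCorner]
  exact hw (n + 1)

lemma ModelStructure.level_trivCof (f : X ⟶ Y) (h0 : S.Cof (f.app 0) ∧ S.W (f.app 0))
    (hc : ∀ n, S.Cof (seqCorner f n) ∧ S.W (seqCorner f n)) :
    ∀ n, S.Cof (f.app n) ∧ S.W (f.app n) := by
  intro n
  induction n with
  | zero => exact h0
  | succ n ih =>
    have hinl := S.trivCof_pushout_inl (X.map (homOfLE (Nat.le_succ n))) (f.app n) ih.1 ih.2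
    have := S.trivCof_comp _ _ hinl.1 hinl.2 (hc n).1 (hc n).2
    rwa [inl_seqCorner] at this

end Seq

end Paper

namespace Paper

variable {M : Type u} [Category.{v} M] [HasPushouts M]

lemma seqCorner_isRetract {X Y A B : ℕ ⥤ M} (f : X ⟶ Y) (g : A ⟶ B)
    (I : X ⟶ A) (Rr : A ⟶ X) (I' : Y ⟶ B) (R' : B ⟶ Y)
    (hIR : I ≫ Rr = 𝟙 X) (hI'R' : I' ≫ R' = 𝟙 Y) (hIg : I ≫ g = f ≫ I')
    (hgR' : g ≫ R' = Rr ≫ f) (n : ℕ) :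
    IsRetract (seqCorner f n) (seqCorner g n) := by
  have hIg' := fun m => congr_app hIg m
  have hgR'' := fun m => congr_app hgR' m
  have hIR' := fun m => congr_app hIR m
  have hI'R'' := fun m => congr_app hI'R' m
  simp only [NatTrans.comp_app, NatTrans.id_app] at hIg' hgR'' hIR' hI'R''
  refine ⟨pushout.desc (I.app (n + 1) ≫ pushout.inl _ _) (I'.app n ≫ pushout.inr _ _) ?_,
    pushout.desc (Rr.app (n + 1) ≫ pushout.inl _ _) (R'.app n ≫ pushout.inr _ _) ?_,
    I'.app (n + 1), R'.app (n + 1), ?_, ?_, ?_, ?_⟩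
  · rw [← Category.assoc, I.naturality, Category.assoc, pushout.condition,
      ← Category.assoc, hIg' n, Category.assoc]
  · rw [← Category.assoc, Rr.naturality, Category.assoc, pushout.condition,
      ← Category.assoc, ← hgR'' n, Category.assoc]
  · apply pushout.hom_ext
    · rw [← Category.assoc, pushout.inl_desc, Category.assoc, pushout.inl_desc,
        ← Category.assoc, hIR' (n + 1), Category.id_comp, Category.comp_id]
    · rw [← Category.assoc, pushout.inr_desc, Category.assoc, pushout.inr_desc,
        ← Category.assoc, hI'R'' n, Category.id_comp, Category.comp_id]
  · exact hI'R'' (n + 1)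
  · apply pushout.hom_ext <;>
      simp [seqCorner, hIg', I'.naturality (homOfLE (Nat.le_succ n)), pushout.inl_desc, pushout.inr_desc, pushout.inl_desc_assoc, pushout.inr_desc_assoc]
  · apply pushout.hom_ext <;>
      simp [seqCorner, hgR'', R'.naturality (homOfLE (Nat.le_succ n)), pushout.inl_desc, pushout.inr_desc, pushout.inl_desc_assoc, pushout.inr_desc_assoc]

lemma seqCorner_isIso {X Y : ℕ ⥤ M} (f : X ⟶ Y) [IsIso f] (n : ℕ) :
    IsIso (seqCorner f n) := by
  have h : IsPushout (X.map (homOfLE (Nat.le_succ n))) (f.app n)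
      (f.app (n + 1)) (Y.map (homOfLE (Nat.le_succ n))) :=
    (IsPushout.of_horiz_isIso ⟨(f.naturality (homOfLE (Nat.le_succ n))).symm⟩).flip
  have : seqCorner f n = h.isoPushout.inv := by
    apply pushout.hom_ext
    · rw [inl_seqCorner, h.inl_isoPushout_inv]
    · rw [inr_seqCorner, h.inr_isoPushout_inv]
  rw [this]
  infer_instance

variable (S : ModelStructure M)

lemma ModelStructure.liftSeq {A B X Y : ℕ ⥤ M} (i : A ⟶ B) (p : X ⟶ Y)
    (h0 : HasLiftingProperty (i.app 0) (p.app 0))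
    (hc : ∀ n, HasLiftingProperty (seqCorner i n) (p.app (n + 1))) :
    HasLiftingProperty i p := by
  constructor
  intro F G sq
  have h0' : ∃ g0 : B.obj 0 ⟶ X.obj 0,
      i.app 0 ≫ g0 = F.app 0 ∧ g0 ≫ p.app 0 = G.app 0 := by
    have sq0 : CommSq (F.app 0) (i.app 0) (p.app 0) (G.app 0) :=
      ⟨by simpa using congr_app sq.w 0⟩
    exact ⟨sq0.lift, sq0.fac_left, sq0.fac_right⟩
  have hs' : ∀ (n : ℕ) (g : B.obj n ⟶ X.obj n),
      (i.app n ≫ g = F.app n ∧ g ≫ p.app n = G.app n) →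
      ∃ g' : B.obj (n + 1) ⟶ X.obj (n + 1),
        (i.app (n + 1) ≫ g' = F.app (n + 1) ∧ g' ≫ p.app (n + 1) = G.app (n + 1)) ∧
        B.map (homOfLE (Nat.le_succ n)) ≫ g' = g ≫ X.map (homOfLE (Nat.le_succ n)) := by
    rintro n g ⟨hg1, hg2⟩
    have w1 : A.map (homOfLE (Nat.le_succ n)) ≫ F.app (n + 1) =
        i.app n ≫ (g ≫ X.map (homOfLE (Nat.le_succ n))) := by
      rw [F.naturality, ← Category.assoc, hg1]
    have sqn : CommSq (pushout.desc (F.app (n + 1)) (g ≫ X.map (homOfLE (Nat.le_succ n))) w1)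
        (seqCorner i n) (p.app (n + 1)) (G.app (n + 1)) := by
      constructor
      apply pushout.hom_ext
      · rw [← Category.assoc, pushout.inl_desc, ← Category.assoc, inl_seqCorner]
        simpa using congr_app sq.w (n + 1)
      · rw [← Category.assoc, pushout.inr_desc, ← Category.assoc, inr_seqCorner,
          Category.assoc, p.naturality, ← Category.assoc, hg2, G.naturality]
    haveI := hc n
    refine ⟨sqn.lift, ⟨?_, sqn.fac_right⟩, ?_⟩
    · rw [← inl_seqCorner, Category.assoc, sqn.fac_left, pushout.inl_desc]
    · rw [← inr_seqCorner, Category.assoc, sqn.fac_left, pushout.inr_desc]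
  obtain ⟨l, hl, hR⟩ := exists_seq
    (α := fun n => B.obj n ⟶ X.obj n)
    (fun n g => i.app n ≫ g = F.app n ∧ g ≫ p.app n = G.app n)
    (fun n g g' => B.map (homOfLE (Nat.le_succ n)) ≫ g' =
      g ≫ X.map (homOfLE (Nat.le_succ n)))
    h0' hs'
  exact CommSq.HasLift.mk'
    { l := NatTrans.ofSequence l (fun n => hR n)
      fac_left := by ext n; exact (hl n).1
      fac_right := by ext n; exact (hl n).2 }

end Paper

namespace Paper

variable {M : Type u} [Category.{v} M] [HasPushouts M]

lemma factSeq (C₁ C₂ : MorphismProperty M)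
    (fact : ∀ {x y : M} (g : x ⟶ y),
      ∃ (z : M) (c : x ⟶ z) (q : z ⟶ y), C₁ c ∧ C₂ q ∧ c ≫ q = g)
    {X Y : ℕ ⥤ M} (f : X ⟶ Y) :
    ∃ (Z : ℕ ⥤ M) (i : X ⟶ Z) (p : Z ⟶ Y),
      C₁ (i.app 0) ∧ (∀ n, C₁ (seqCorner i n)) ∧ (∀ n, C₂ (p.app n)) ∧ i ≫ p = f := by
  have h0' : ∃ a : (z : M) ×' (X.obj 0 ⟶ z) ×' (z ⟶ Y.obj 0),
      ((0 = 0 → C₁ a.2.1) ∧ C₂ a.2.2 ∧ a.2.1 ≫ a.2.2 = f.app 0) := by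
    obtain ⟨z, c, q, h1, h2, h3⟩ := fact (f.app 0)
    exact ⟨⟨z, c, q⟩, fun _ => h1, h2, h3⟩
  have hs' : ∀ (n : ℕ) (a : (z : M) ×' (X.obj n ⟶ z) ×' (z ⟶ Y.obj n)),
      ((n = 0 → C₁ a.2.1) ∧ C₂ a.2.2 ∧ a.2.1 ≫ a.2.2 = f.app n) →
      ∃ b : (z : M) ×' (X.obj (n + 1) ⟶ z) ×' (z ⟶ Y.obj (n + 1)),
        ((n + 1 = 0 → C₁ b.2.1) ∧ C₂ b.2.2 ∧ b.2.1 ≫ b.2.2 = f.app (n + 1)) ∧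
        ∃ (ζ : a.1 ⟶ b.1)
          (w : X.map (homOfLE (Nat.le_succ n)) ≫ b.2.1 = a.2.1 ≫ ζ),
          C₁ (pushout.desc b.2.1 ζ w) ∧
            ζ ≫ b.2.2 = a.2.2 ≫ Y.map (homOfLE (Nat.le_succ n)) := by
    rintro n ⟨z, cin, pn⟩ ⟨-, hC2, hfac⟩
    dsimp at hC2 hfac ⊢
    have wq : X.map (homOfLE (Nat.le_succ n)) ≫ f.app (n + 1) =
        cin ≫ (pn ≫ Y.map (homOfLE (Nat.le_succ n))) := by
      rw [f.naturality, ← Category.assoc, hfac]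
    obtain ⟨z', c, q', hC1, hC2', hfac'⟩ :=
      fact (pushout.desc (f.app (n + 1)) (pn ≫ Y.map (homOfLE (Nat.le_succ n))) wq)
    refine ⟨⟨z', pushout.inl _ _ ≫ c, q'⟩,
      ⟨fun h => (Nat.succ_ne_zero n h).elim, hC2', ?_⟩,
      pushout.inr _ _ ≫ c, ?_, ?_, ?_⟩
    · rw [Category.assoc, hfac', pushout.inl_desc]
    · rw [← Category.assoc, pushout.condition, Category.assoc]
    · have : pushout.desc (pushout.inl (X.map (homOfLE (Nat.le_succ n))) cin ≫ c)
          (pushout.inr _ _ ≫ c)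
          (by rw [← Category.assoc, pushout.condition, Category.assoc]) = c := by
        apply pushout.hom_ext <;> simp [pushout.inl_desc, pushout.inr_desc]
      rw [this]
      exact hC1
    · rw [Category.assoc, hfac', pushout.inr_desc]
  obtain ⟨g, hP, hR⟩ := exists_seq
    (α := fun n => (z : M) ×' (X.obj n ⟶ z) ×' (z ⟶ Y.obj n))
    (fun n a => (n = 0 → C₁ a.2.1) ∧ C₂ a.2.2 ∧ a.2.1 ≫ a.2.2 = f.app n)
    (fun n a b => ∃ (ζ : a.1 ⟶ b.1)
      (w : X.map (homOfLE (Nat.le_succ n)) ≫ b.2.1 = a.2.1 ≫ ζ),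
      C₁ (pushout.desc b.2.1 ζ w) ∧ ζ ≫ b.2.2 = a.2.2 ≫ Y.map (homOfLE (Nat.le_succ n)))
    h0' hs'
  set ζ : ∀ n, (g n).1 ⟶ (g (n + 1)).1 := fun n => (hR n).choose with hζ
  have hw : ∀ n, X.map (homOfLE (Nat.le_succ n)) ≫ (g (n + 1)).2.1 = (g n).2.1 ≫ ζ n :=
    fun n => (hR n).choose_spec.choose
  have hC1 : ∀ n, C₁ (pushout.desc (g (n + 1)).2.1 (ζ n) (hw n)) :=
    fun n => (hR n).choose_spec.choose_spec.1
  have hζp : ∀ n, ζ n ≫ (g (n + 1)).2.2 = (g n).2.2 ≫ Y.map (homOfLE (Nat.le_succ n)) :=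
    fun n => (hR n).choose_spec.choose_spec.2
  refine ⟨Functor.ofSequence ζ,
    NatTrans.ofSequence (F := X) (G := Functor.ofSequence ζ) (fun n => (g n).2.1)
      (fun n => by simp; exact hw n),
    NatTrans.ofSequence (F := Functor.ofSequence ζ) (G := Y) (fun n => (g n).2.2)
      (fun n => by simp; exact hζp n), ?_, ?_, ?_, ?_⟩
  · exact (hP 0).1 rfl
  · intro n
    have heq : seqCorner (NatTrans.ofSequence (F := X) (G := Functor.ofSequence ζ)
        (fun n => (g n).2.1) (fun n => by simp; exact hw n)) n =
        pushout.desc (g (n + 1)).2.1 (ζ n) (hw n) := by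
      apply pushout.hom_ext
      · rw [inl_seqCorner]
        erw [pushout.inl_desc]
        rfl
      · rw [inr_seqCorner]
        erw [pushout.inr_desc]
        simp
        rfl
    rw [heq]
    exact hC1 n
  · exact fun n => (hP n).2.1
  · ext n
    exact (hP n).2.2

end Paper

namespace Paper

variable {M : Type u} [Category.{v} M]

lemma isIso_of_isInitial {a b : M} (ha : IsInitial a) (hb : IsInitial b) (f : a ⟶ b) :
    IsIso f :=
  ⟨hb.to a, ha.hom_ext _ _, hb.hom_ext _ _⟩

variable [HasPushouts M] [HasInitial M]

noncomputable def iniObj (n : ℕ) : IsInitial ((⊥_ (ℕ ⥤ M)).obj n) :=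
  initialIsInitial.isInitialObj ((evaluation ℕ M).obj n) _

lemma IsRetract.app {X Y A B : ℕ ⥤ M} {f : X ⟶ Y} {g : A ⟶ B} (h : IsRetract f g) (n : ℕ) :
    IsRetract (f.app n) (g.app n) := by
  obtain ⟨I, Rr, I', R', h1, h2, h3, h4⟩ := h
  exact ⟨I.app n, Rr.app n, I'.app n, R'.app n,
    by simpa using congr_app h1 n, by simpa using congr_app h2 n,
    by simpa using congr_app h3 n, by simpa using congr_app h4 n⟩

lemma cofSeq_initial_iff (S : ModelStructure M) (X : ℕ ⥤ M) :
    (S.Cof ((initial.to X).app 0) ∧ ∀ n, S.Cof (seqCorner (initial.to X) n)) ↔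
      (S.Cof (initial.to (X.obj 0)) ∧
        ∀ n : ℕ, S.Cof (X.map (homOfLE (Nat.le_succ n)))) := by
  have e0 : (⊥_ M) ≅ (⊥_ (ℕ ⥤ M)).obj 0 := initialIsInitial.uniqueUpToIso (iniObj 0)
  have h1 : S.Cof ((initial.to X).app 0) ↔ S.Cof (initial.to (X.obj 0)) := by
    refine (S.cof_iff_of_isos (initial.to (X.obj 0)) ((initial.to X).app 0)
      e0 (Iso.refl _) (initial.hom_ext _ _)).symm
  have h2 : ∀ n, S.Cof (seqCorner (initial.to X) n) ↔
      S.Cof (X.map (homOfLE (Nat.le_succ n))) := by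
    intro n
    haveI : IsIso ((⊥_ (ℕ ⥤ M)).map (homOfLE (Nat.le_succ n))) :=
      isIso_of_isInitial (iniObj n) (iniObj (n + 1)) _
    have hpo : IsPushout ((⊥_ (ℕ ⥤ M)).map (homOfLE (Nat.le_succ n)))
        ((initial.to X).app n) ((iniObj (n + 1)).to (X.obj n)) (𝟙 (X.obj n)) :=
      IsPushout.of_horiz_isIso ⟨(iniObj n).hom_ext _ _⟩
    haveI : IsIso (pushout.inr ((⊥_ (ℕ ⥤ M)).map (homOfLE (Nat.le_succ n)))
        ((initial.to X).app n)) := by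
      have := hpo.inr_isoPushout_hom
      rw [Category.id_comp] at this
      rw [← this]
      infer_instance
    refine S.cof_iff_of_isos _ _ ((asIso (pushout.inr _ _)).symm) (Iso.refl _) ?_
    simp only [Iso.refl_hom, Category.comp_id, Iso.symm_hom, asIso_inv]
    rw [IsIso.inv_comp_eq]
    exact (inr_seqCorner _ n).symm
  rw [h1]
  exact and_congr Iff.rfl (forall_congr' h2)

end Paper


section Statement17

open Paper

/-- Let `M` be a model category with pushouts and let `ℕ` be the poset of
natural numbers.  Then `Fun(ℕ, M)` admits a model structure with componentwise weak
equivalences and fibrations, whose cofibrations are the maps `f` with `f_0` a cofibration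
and all the corner maps `X_{n+1} ⊔_{X_n} Y_n → Y_{n+1}` cofibrations.  Moreover an object
`X` is cofibrant iff `X_0` is cofibrant and every `X_n → X_{n+1}` is a cofibration, the
constant functor preserves fibrations and trivial fibrations, and if `M` has sequential
colimits then `colim ⊣ const` is a Quillen adjunction. -/
theorem reedy_model_structure_on_sequential_diagrams
    {M : Type u} [Category.{v} M] [HasPushouts M] [HasInitial M]
    [HasColimitsOfShape ℕ M]
    (S : ModelStructure M) :
    ∃ T : ModelStructure (ℕ ⥤ M),
      (∀ {X Y : ℕ ⥤ M} (f : X ⟶ Y), T.W f ↔ ∀ n, S.W (f.app n)) ∧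
      (∀ {X Y : ℕ ⥤ M} (f : X ⟶ Y), T.Fib f ↔ ∀ n, S.Fib (f.app n)) ∧
      (∀ {X Y : ℕ ⥤ M} (f : X ⟶ Y), T.Cof f ↔
        (S.Cof (f.app 0) ∧ ∀ n, S.Cof (seqCorner f n))) ∧
      (∀ X : ℕ ⥤ M, T.Cofibrant X ↔
        (S.Cofibrant (X.obj 0) ∧ ∀ n : ℕ, S.Cof (X.map (homOfLE (Nat.le_succ n))))) ∧
      (∀ {x y : M} (p : x ⟶ y), S.Fib p → T.Fib ((Functor.const ℕ).map p)) ∧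
      (∀ {x y : M} (p : x ⟶ y), S.Fib p → S.W p →
        T.Fib ((Functor.const ℕ).map p) ∧ T.W ((Functor.const ℕ).map p)) ∧
      (∀ {X Y : ℕ ⥤ M} (f : X ⟶ Y), T.Cof f →
        S.Cof ((colim (J := ℕ) (C := M)).map f)) ∧
      (∀ {X Y : ℕ ⥤ M} (f : X ⟶ Y), T.Cof f → T.W f →
        S.Cof ((colim (J := ℕ) (C := M)).map f) ∧
        S.W ((colim (J := ℕ) (C := M)).map f)) := by
  haveI := S.two_of_three
  refine ⟨{
    W := fun X Y f => ∀ n, S.W (f.app n)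
    Cof := fun X Y f => S.Cof (f.app 0) ∧ ∀ n, S.Cof (seqCorner f n)
    Fib := fun X Y f => ∀ n, S.Fib (f.app n)
    iso_W := fun X Y f hf n => by
      haveI : IsIso f := hf
      exact S.iso_W _ (inferInstance : IsIso (f.app n))
    iso_Cof := fun X Y f hf => by
      haveI : IsIso f := hf
      exact ⟨S.iso_Cof _ (inferInstance : IsIso (f.app 0)),
        fun n => S.iso_Cof _ (seqCorner_isIso f n)⟩
    iso_Fib := fun X Y f hf n => by
      haveI : IsIso f := hf
      exact S.iso_Fib _ (inferInstance : IsIso (f.app n))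
    two_of_three := {
      comp_mem := fun f g hf hg n => by
        simpa using S.W.comp_mem _ _ (hf n) (hg n)
      of_postcomp := fun f g hg hfg n =>
        S.W.of_postcomp (f.app n) (g.app n) (hg n) (by simpa using hfg n)
      of_precomp := fun f g hf hfg n =>
        S.W.of_precomp (f.app n) (g.app n) (hf n) (by simpa using hfg n) }
    retract_W := fun f g h hg n => S.retract_W _ _ (h.app n) (hg n)
    retract_Cof := fun f g h hg => by
      have happ := h.app 0
      obtain ⟨I, Rr, I', R', h1, h2, h3, h4⟩ := h
      exact ⟨S.retract_Cof _ _ happ hg.1,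
        fun n => S.retract_Cof _ _
          (seqCorner_isRetract f g I Rr I' R' h1 h2 h3 h4 n) (hg.2 n)⟩
    retract_Fib := fun f g h hg n => S.retract_Fib _ _ (h.app n) (hg n)
    lift_Cof_trivFib := fun i p hi hw hp =>
      ModelStructure.liftSeq i p (S.lift_Cof_trivFib _ _ hi.1 (hw 0) (hp 0))
        (fun n => S.lift_Cof_trivFib _ _ (hi.2 n) (hw (n + 1)) (hp (n + 1)))
    lift_trivCof_Fib := fun i p hi hwi hp =>
      ModelStructure.liftSeq i p (S.lift_trivCof_Fib _ _ hi.1 (hwi 0) (hp 0))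
        (fun n => S.lift_trivCof_Fib _ _ (hi.2 n)
          (S.corner_W i hi.1 hi.2 hwi n) (hp (n + 1)))
    fact_Cof_trivFib := fun f => by
      obtain ⟨Z, i, p, h0, hc, h2, h3⟩ := factSeq S.Cof (fun _ _ g => S.W g ∧ S.Fib g)
        (fun g => by
          obtain ⟨z, i, p, ha, hb, hcc, hd⟩ := S.fact_Cof_trivFib g
          exact ⟨z, i, p, ha, ⟨hb, hcc⟩, hd⟩) f
      exact ⟨Z, i, p, ⟨h0, hc⟩, fun n => (h2 n).1, fun n => (h2 n).2, h3⟩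
    fact_trivCof_Fib := fun f => by
      obtain ⟨Z, i, p, h0, hc, h2, h3⟩ := factSeq (fun _ _ g => S.Cof g ∧ S.W g) S.Fib
        (fun g => by
          obtain ⟨z, i, p, ha, hb, hcc, hd⟩ := S.fact_trivCof_Fib g
          exact ⟨z, i, p, ⟨ha, hb⟩, hcc, hd⟩) f
      exact ⟨Z, i, p, ⟨h0.1, fun n => (hc n).1⟩,
        fun n => (S.level_trivCof i h0 hc n).2, h2, h3⟩ },
    fun f => Iff.rfl, fun f => Iff.rfl, fun f => Iff.rfl,
    fun X => cofSeq_initial_iff S X,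
    fun p hp n => hp,
    fun p hp hw => ⟨fun n => hp, fun n => hw⟩,
    ?_, ?_⟩
  · intro X Y f hf
    refine S.cof_of_llp _ fun q hw hq => ?_
    rw [colimConstAdj.hasLiftingProperty_iff]
    exact ModelStructure.liftSeq f ((Functor.const ℕ).map q)
      (S.lift_Cof_trivFib _ _ hf.1 hw hq)
      (fun n => S.lift_Cof_trivFib _ _ (hf.2 n) hw hq)
  · intro X Y f hf hwf
    refine S.trivCof_of_llp _ fun q hq => ?_
    rw [colimConstAdj.hasLiftingProperty_iff]
    exact ModelStructure.liftSeq f ((Functor.const ℕ).map q)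
      (S.lift_trivCof_Fib _ _ hf.1 (hwf 0) hq)
      (fun n => S.lift_trivCof_Fib _ _ (hf.2 n) (S.corner_W f hf.1 hf.2 hwf n) hq)

end Statement17
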